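/- Let R be a commutative Noetherian ring and x_1,...,x_d a regular R-sequence contained in the Jacobson radical of R. Let I be a nonzero monomial ideal with generating monomials u_1,...,u_r, and suppose u_1 = vw where v and w are coprime monomials, both ≠ 1. Then I = (vR + u_2R + ... + u_rR) ∩ (wR + u_2R + ... + u_rR). -/

import Mathlib

open RingTheory.Sequence Ideal Pointwise

universe u

section
variable {R : Type*} [CommRing R]

lemma perm_ofFn_succAbove : ∀ {d : ℕ} (x : Fin (d+1) → R) (i : Fin (d+1)),
    (List.ofFn x).Perm (x i :: List.ofFn (x ∘ i.succAbove)) := by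
  intro d
  induction d with
  | zero => intro x i; fin_cases i <;> simp [List.ofFn_succ]
  | succ d ih =>
    intro x i
    rcases Fin.eq_zero_or_eq_succ i with rfl | ⟨j, rfl⟩
    · simp only [List.ofFn_succ]
      exact List.Perm.refl _
    · rw [List.ofFn_succ]
      refine ((ih (x ∘ Fin.succ) j).cons (x 0)).trans ?_
      refine (List.Perm.swap _ _ _).trans (List.Perm.cons _ ?_)
      have : List.ofFn (x ∘ j.succ.succAbove) =
          x 0 :: List.ofFn ((x ∘ Fin.succ) ∘ j.succAbove) := by
        rw [List.ofFn_succ]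
        congr 1
        · simp [Function.comp, Fin.succ_succAbove_zero]; rfl
      rw [this]

lemma jacobson_mk_mem {t : R} {y : R} (h : y ∈ Ideal.jacobson (⊥ : Ideal R)) :
    (Ideal.Quotient.mk (Ideal.span {t})) y ∈ Ideal.jacobson (⊥ : Ideal (R ⧸ Ideal.span {t})) := by
  rw [Ideal.mem_jacobson_bot] at h ⊢
  intro z
  obtain ⟨z, rfl⟩ := Ideal.Quotient.mk_surjective z
  rw [← _root_.map_mul, ← map_one (Ideal.Quotient.mk (Ideal.span {t})), ← _root_.map_add]
  exact (h z).map _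

end

section
variable {R : Type*} [CommRing R] [IsNoetherianRing R]

lemma wr_perm {L L' : List R} (h : IsWeaklyRegular R L) (hp : L.Perm L')
    (hj : ∀ r ∈ L, r ∈ Ideal.jacobson (⊥ : Ideal R)) : IsWeaklyRegular R L' :=
  h.of_perm_of_subset_jacobson_annihilator hp
    (fun r hr => Ideal.jacobson_mono bot_le (hj r hr))

omit [IsNoetherianRing R] in
lemma wr_prefix {L L' : List R} (h : IsWeaklyRegular R (L ++ L')) : IsWeaklyRegular R L :=
  ((isWeaklyRegular_append_iff R L L').mp h).1

omit [IsNoetherianRing R] in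
lemma wr_quot {t : R} {L : List R} (h : IsWeaklyRegular R (t :: L)) :
    IsWeaklyRegular (R ⧸ Ideal.span {t}) (L.map (Ideal.Quotient.mk (Ideal.span {t}))) := by
  rw [isWeaklyRegular_cons_iff] at h
  have hEq : (t • ⊤ : Submodule R R) = (Ideal.span {t} : Ideal R) := by
    rw [← Submodule.ideal_span_singleton_smul, smul_eq_mul, Ideal.mul_top]
  have e := Submodule.quotEquivOfEq _ _ hEq
  have h3 := (e.isWeaklyRegular_congr L).mp h.2
  have h4 := (isWeaklyRegular_map_algebraMap_iff (R := R) (S := R ⧸ Ideal.span {t})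
      (M := R ⧸ Ideal.span {t}) L).mpr h3
  rwa [Ideal.Quotient.algebraMap_eq] at h4

end

section
variable {R : Type u} [CommRing R]

lemma mon_decomp {d : ℕ} (x : Fin d → R) (e : Fin d → ℕ) (i0 : Fin d) (h : e i0 ≠ 0) :
    (∏ l, x l ^ e l) = (∏ l, x l ^ (e l - if l = i0 then 1 else 0)) * x i0 := by
  classical
  have h1 : ∀ l, e l = (e l - if l = i0 then 1 else 0) + (if l = i0 then 1 else 0) := by
    intro l
    by_cases hl : l = i0
    · subst hl; simp; omega
    · simp [hl]
  calc (∏ l, x l ^ e l)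
      = ∏ l, (x l ^ (e l - if l = i0 then 1 else 0) * x l ^ (if l = i0 then 1 else 0)) := by
        refine Finset.prod_congr rfl fun l _ => ?_
        rw [← pow_add, ← h1 l]
    _ = (∏ l, x l ^ (e l - if l = i0 then 1 else 0)) * ∏ l, x l ^ (if l = i0 then 1 else 0) :=
        Finset.prod_mul_distrib
    _ = (∏ l, x l ^ (e l - if l = i0 then 1 else 0)) * x i0 := by
        congr 1
        calc (∏ l, x l ^ (if l = i0 then 1 else 0))
            = ∏ l, (if l = i0 then x l else 1) := by
              refine Finset.prod_congr rfl fun l _ => ?_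
              by_cases hl : l = i0 <;> simp [hl]
          _ = x i0 := by rw [Finset.prod_ite_eq' Finset.univ i0 (fun l => x l)]; simp

lemma mon_add {d : ℕ} (x : Fin d → R) (p q : Fin d → ℕ) :
    (∏ l, x l ^ (p l + q l)) = (∏ l, x l ^ p l) * (∏ l, x l ^ q l) := by
  rw [← Finset.prod_mul_distrib]
  exact Finset.prod_congr rfl fun l _ => pow_add _ _ _
end

theorem keyP (e μ : ℕ) (R : Type u) [CommRing R] [IsNoetherianRing R]
    (x : Fin e → R) (z : R)
    (hreg : RingTheory.Sequence.IsWeaklyRegular R (List.ofFn x ++ [z]))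
    (hjac : ∀ r ∈ List.ofFn x ++ [z], r ∈ Ideal.jacobson (⊥ : Ideal R))
    (ι : Type) [Fintype ι] (E : ι → Fin e → ℕ) (hμ : (∑ j, ∑ i, E j i) ≤ μ)
    (β : R) (hβ : z * β ∈ Ideal.span (Set.range fun j => ∏ i, x i ^ E j i)) :
    β ∈ Ideal.span (Set.range fun j => ∏ i, x i ^ E j i) := by
  classical
  by_cases hι : IsEmpty ι
  · rw [Set.range_eq_empty _, Ideal.span_empty] at hβ ⊢
    have hz : IsSMulRegular R z := by
      have h1 : IsWeaklyRegular R (z :: List.ofFn x) :=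
        wr_perm hreg (List.perm_append_singleton z (List.ofFn x)) hjac
      exact ((RingTheory.Sequence.isWeaklyRegular_cons_iff R z _).mp h1).1
    have : z * β = z * 0 := by simpa using hβ
    simpa using hz this
  rw [not_isEmpty_iff] at hι
  by_cases hone : ∃ j, ∀ i, E j i = 0
  · obtain ⟨j, hj⟩ := hone
    have h1 : (1 : R) ∈ Ideal.span (Set.range fun j => ∏ i, x i ^ E j i) :=
      Ideal.subset_span ⟨j, by simp [hj]⟩
    exact (Ideal.eq_top_iff_one _).mpr h1 ▸ trivial
  push_neg at hone
  cases e with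
  | zero => obtain ⟨i, _⟩ := hone hι.some; exact absurd i.2 (by omega)
  | succ e' =>
  set t : R := x (Fin.last e') with ht
  set y : Fin e' → R := fun i => x i.castSucc with hy
  have hxsplit : List.ofFn x = List.ofFn y ++ [t] := by
    rw [List.ofFn_succ']; simp [hy, ht]
  have hm : ∀ j, (∏ i, x i ^ E j i)
      = (∏ i : Fin e', y i ^ E j (Fin.castSucc i)) * t ^ (E j (Fin.last e')) :=
    fun j => Fin.prod_univ_castSucc _
  have hjacx : ∀ i, x i ∈ Ideal.jacobson (⊥ : Ideal R) := by
    intro i; exact hjac _ (List.mem_append_left _ (List.mem_ofFn.mpr ⟨i, rfl⟩))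
  have hjacz : z ∈ Ideal.jacobson (⊥ : Ideal R) := hjac _ (by simp)
  by_cases hS : ∀ j, E j (Fin.last e') = 0
  · -- no generator involves t : drop the variable t
    have hgen : (fun j => ∏ i, x i ^ E j i)
        = (fun j : ι => ∏ i : Fin e', y i ^ E j (Fin.castSucc i)) := by
      funext j; rw [hm j, hS j, pow_zero, mul_one]
    have hperm : (List.ofFn x ++ [z]).Perm ((List.ofFn y ++ [z]) ++ [t]) := by
      rw [hxsplit, List.append_assoc, List.append_assoc]
      exact List.Perm.append_left _ (List.Perm.swap z t [])
    have hreg' : IsWeaklyRegular R (List.ofFn y ++ [z]) :=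
      wr_prefix (wr_perm hreg hperm hjac)
    have hjac' : ∀ r ∈ List.ofFn y ++ [z], r ∈ Ideal.jacobson (⊥ : Ideal R) := by
      intro r hr
      rcases List.mem_append.mp hr with hr | hr
      · obtain ⟨i, rfl⟩ := List.mem_ofFn.mp hr; exact hjacx _
      · simp at hr; subst hr; exact hjacz
    rw [hgen] at hβ ⊢
    refine keyP e' μ R y z hreg' hjac' ι (fun j i => E j (Fin.castSucc i)) ?_ β hβ
    show (∑ j : ι, ∑ i : Fin e', E j (Fin.castSucc i)) ≤ μ
    have heq : (∑ j : ι, ∑ i : Fin e', E j (Fin.castSucc i)) = ∑ j, ∑ i, E j i :=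
      Finset.sum_congr rfl fun j _ => by
        rw [Fin.sum_univ_castSucc (f := E j), hS j, add_zero]
    omega
  · push_neg at hS
    obtain ⟨j0, hj0⟩ := hS
    by_cases hA : ∀ j, E j (Fin.last e') ≠ 0 →
        (E j (Fin.last e') = 1 ∧ ∀ i : Fin e', E j (Fin.castSucc i) = 0)
    · -- all generators involving t are equal to t : pass to R/(t)
      set S := R ⧸ Ideal.span {t} with hSdef
      set π := Ideal.Quotient.mk (Ideal.span {t}) with hπ
      have hpermt : (List.ofFn x ++ [z]).Perm (t :: (List.ofFn y ++ [z])) := by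
        rw [hxsplit, List.append_assoc]
        exact List.perm_middle
      have hregq0 : IsWeaklyRegular R (t :: (List.ofFn y ++ [z])) := wr_perm hreg hpermt hjac
      have hregq : IsWeaklyRegular S (List.ofFn (π ∘ y) ++ [π z]) := by
        have := wr_quot hregq0
        rwa [List.map_append, List.map_ofFn] at this
      have hjacq : ∀ r ∈ List.ofFn (π ∘ y) ++ [π z], r ∈ Ideal.jacobson (⊥ : Ideal S) := by
        intro r hr
        rcases List.mem_append.mp hr with hr | hr
        · obtain ⟨i, rfl⟩ := List.mem_ofFn.mp hr
          exact jacobson_mk_mem (hjacx _)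
        · simp at hr; subst hr; exact jacobson_mk_mem hjacz
      have htpure : ∀ j, E j (Fin.last e') ≠ 0 → (∏ i, x i ^ E j i) = t := by
        intro j hj
        obtain ⟨h1, h2⟩ := hA j hj
        rw [hm j, h1, pow_one]
        have : (∏ i : Fin e', y i ^ E j (Fin.castSucc i)) = 1 :=
          Finset.prod_eq_one fun i _ => by rw [h2 i, pow_zero]
        rw [this, one_mul]
      -- the ideal over the quotient
      have hβq : π z * π β ∈ Ideal.span (Set.range fun j : {j : ι // E j (Fin.last e') = 0} =>
          ∏ i : Fin e', (π ∘ y) i ^ E j.1 (Fin.castSucc i)) := by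
        have h1 : π (z * β) ∈ Ideal.map π (Ideal.span (Set.range fun j => ∏ i, x i ^ E j i)) :=
          Ideal.mem_map_of_mem π hβ
        rw [Ideal.map_span, ← Set.range_comp] at h1
        rw [← _root_.map_mul]
        refine Ideal.span_le.mpr ?_ h1
        rintro _ ⟨j, rfl⟩
        simp only [Function.comp_apply]
        by_cases hEj : E j (Fin.last e') = 0
        · apply Ideal.subset_span
          refine ⟨⟨j, hEj⟩, ?_⟩
          simp only [Function.comp_apply, hm j, hEj, pow_zero, mul_one, map_prod, map_pow]
        · have hz0 : π (∏ i, x i ^ E j i) = 0 := by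
            rw [htpure j hEj, hπ, Ideal.Quotient.eq_zero_iff_mem]
            exact Ideal.subset_span rfl
          rw [hz0]
          exact Submodule.zero_mem _
      have hq := keyP e' (∑ j : {j : ι // E j (Fin.last e') = 0}, ∑ i, E j.1 (Fin.castSucc i))
        S (π ∘ y) (π z) hregq hjacq _ _ le_rfl (π β) hβq
      -- pull back
      have hM0 : Ideal.span (Set.range fun j : {j : ι // E j (Fin.last e') = 0} =>
            ∏ i : Fin e', (π ∘ y) i ^ E j.1 (Fin.castSucc i))
          = Ideal.map π (Ideal.span (Set.range fun j : {j : ι // E j (Fin.last e') = 0} =>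
            ∏ i : Fin e', y i ^ E j.1 (Fin.castSucc i))) := by
        rw [Ideal.map_span, ← Set.range_comp]
        have hf : ((⇑π) ∘ fun j : {j : ι // E j (Fin.last e') = 0} =>
            ∏ i : Fin e', y i ^ E j.1 (Fin.castSucc i))
            = fun j : {j : ι // E j (Fin.last e') = 0} =>
            ∏ i : Fin e', (π ∘ y) i ^ E j.1 (Fin.castSucc i) := by
          funext j
          simp [map_prod, map_pow]
        rw [hf]
      rw [hM0] at hq
      have hq2 : β ∈ Ideal.comap π (Ideal.map π (Ideal.span
          (Set.range fun j : {j : ι // E j (Fin.last e') = 0} =>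
            ∏ i : Fin e', y i ^ E j.1 (Fin.castSucc i)))) := hq
      rw [Ideal.comap_map_of_surjective π Ideal.Quotient.mk_surjective, ← RingHom.ker_eq_comap_bot,
        hπ, Ideal.mk_ker] at hq2
      refine (sup_le ?_ ?_ :
        _ ≤ Ideal.span (Set.range fun j => ∏ i, x i ^ E j i)) hq2
      · refine Ideal.span_le.mpr ?_
        rintro _ ⟨j, rfl⟩
        apply Ideal.subset_span
        refine ⟨j.1, ?_⟩
        show (∏ i, x i ^ E j.1 i) = _
        rw [hm j.1, j.2, pow_zero, mul_one]
      · refine Ideal.span_le.mpr ?_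
        rintro _ rfl
        exact Ideal.subset_span ⟨j0, htpure j0 hj0⟩
    · push_neg at hA
      obtain ⟨j1, hj1a, hj1b⟩ := hA
      have h2sum : 2 ≤ ∑ i, E j1 i := by
        have hsplit := Fin.sum_univ_castSucc (f := E j1)
        by_cases h1 : E j1 (Fin.last e') = 1
        · obtain ⟨i, hi⟩ := hj1b h1
          have h3 : E j1 (Fin.castSucc i) ≤ ∑ i : Fin e', E j1 (Fin.castSucc i) :=
            Finset.single_le_sum (f := fun i : Fin e' => E j1 (Fin.castSucc i))
              (fun _ _ => Nat.zero_le _) (Finset.mem_univ i)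
          omega
        · omega
      set E1 : ι → Fin (e' + 1) → ℕ := fun j => if E j (Fin.last e') = 0 then E j
          else (fun i => if i = Fin.last e' then 1 else 0) with hE1
      have hm1 : ∀ j, E j (Fin.last e') ≠ 0 → (∏ i, x i ^ E1 j i) = t := by
        intro j hj
        rw [hE1]
        simp only [if_neg hj]
        rw [Fin.prod_univ_castSucc (f := fun i : Fin (e' + 1) =>
          x i ^ (if i = Fin.last e' then 1 else 0))]
        have hz : ∀ i : Fin e',
            (if (Fin.castSucc i) = Fin.last e' then 1 else 0) = 0 :=
          fun i => if_neg (Fin.castSucc_lt_last i).ne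
        simp [hz]; exact ht.symm
      have hm1' : ∀ j, E j (Fin.last e') = 0 → E1 j = E j := by
        intro j hj; rw [hE1]; simp [hj]
      have hsum1 : ∀ j, E j (Fin.last e') ≠ 0 → ∑ i, E1 j i = 1 := by
        intro j hj
        rw [hE1]
        simp only [if_neg hj]
        rw [Finset.sum_ite_eq' Finset.univ (Fin.last e') (fun _ => 1)]
        simp
      have hμ1 : ∑ j, ∑ i, E1 j i < μ := by
        have hlt : ∑ j, ∑ i, E1 j i < ∑ j, ∑ i, E j i := by
          apply Finset.sum_lt_sum
          · intro j _
            by_cases hj : E j (Fin.last e') = 0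
            · rw [hm1' j hj]
            · rw [hsum1 j hj]
              have := Finset.single_le_sum (f := E j)
                (fun _ _ => Nat.zero_le _) (Finset.mem_univ (Fin.last e'))
              omega
          · refine ⟨j1, Finset.mem_univ _, ?_⟩
            rw [hsum1 j1 hj1a]
            omega
        omega
      have ht1 : t ∈ Ideal.span (Set.range fun j => ∏ i, x i ^ E1 j i) :=
        Ideal.subset_span ⟨j1, hm1 j1 hj1a⟩
      have hMle : Ideal.span (Set.range fun j => ∏ i, x i ^ E j i) ≤
          Ideal.span (Set.range fun j => ∏ i, x i ^ E1 j i) := by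
        refine Ideal.span_le.mpr ?_
        rintro _ ⟨j, rfl⟩
        show (∏ i, x i ^ E j i) ∈ _
        by_cases hj : E j (Fin.last e') = 0
        · refine Ideal.subset_span ⟨j, ?_⟩
          show (∏ i, x i ^ E1 j i) = _
          rw [hm1' j hj]
        · have hpow : t ^ (E j (Fin.last e')) = t ^ (E j (Fin.last e') - 1) * t := by
            conv_lhs => rw [show E j (Fin.last e') = (E j (Fin.last e') - 1) + 1 by omega]
            rw [pow_succ]
          have hcEq : (∏ i, x i ^ E j i)
              = ((∏ i : Fin e', y i ^ E j (Fin.castSucc i)) * t ^ (E j (Fin.last e') - 1)) * t := by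
            rw [hm j, hpow, mul_assoc]
          rw [hcEq]
          exact Ideal.mul_mem_left _ _ ht1
      have hβ1 : β ∈ Ideal.span (Set.range fun j => ∏ i, x i ^ E1 j i) :=
        keyP (e' + 1) (μ - 1) R x z hreg hjac ι E1 (by omega) β (hMle hβ)
      obtain ⟨c, hc⟩ := (Submodule.mem_span_range_iff_exists_fun R).mp hβ1
      set T0 : Finset ι := Finset.univ.filter (fun j => E j (Fin.last e') = 0) with hT0
      set Tp : Finset ι := Finset.univ.filter (fun j => ¬ E j (Fin.last e') = 0) with hTp
      set β1 : R := ∑ j ∈ Tp, c j with hβ1def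
      set τ : R := ∑ j ∈ T0, c j * (∏ i, x i ^ E j i) with hτ
      have hτM : τ ∈ Ideal.span (Set.range fun j => ∏ i, x i ^ E j i) :=
        Ideal.sum_mem _ fun j _ => Ideal.mul_mem_left _ _ (Ideal.subset_span ⟨j, rfl⟩)
      have hβsplit : β = τ + t * β1 := by
        rw [← hc, ← Finset.sum_filter_add_sum_filter_not Finset.univ
          (fun j => E j (Fin.last e') = 0) (fun j => c j • ∏ i, x i ^ E1 j i)]
        rw [← hT0, ← hTp]
        congr 1
        · refine Finset.sum_congr rfl fun j hj => ?_
          have hj0' : E j (Fin.last e') = 0 := by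
            rw [hT0] at hj; exact (Finset.mem_filter.mp hj).2
          rw [smul_eq_mul, hm1' j hj0']
        · rw [hβ1def, Finset.mul_sum]
          refine Finset.sum_congr rfl fun j hj => ?_
          have hj0' : ¬ E j (Fin.last e') = 0 := by
            rw [hTp] at hj; exact (Finset.mem_filter.mp hj).2
          rw [smul_eq_mul, hm1 j hj0', mul_comm]
      have hztβ : z * (t * β1) ∈ Ideal.span (Set.range fun j => ∏ i, x i ^ E j i) := by
        have heq : z * (t * β1) = z * β - z * τ := by rw [hβsplit]; ring
        rw [heq]
        exact sub_mem hβ (Ideal.mul_mem_left _ _ hτM)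
      obtain ⟨dd, hd⟩ := (Submodule.mem_span_range_iff_exists_fun R).mp hztβ
      set E2 : ι → Fin (e' + 1) → ℕ :=
        (fun j i => if i = Fin.last e' then E j i - 1 else E j i) with hE2
      have hE2eq : ∀ j, E j (Fin.last e') = 0 → E2 j = E j := by
        intro j hj
        funext i
        rw [hE2]
        by_cases h : i = Fin.last e'
        · subst h; simp [hj]
        · simp [h]
      have hm2 : ∀ j, ¬ E j (Fin.last e') = 0 →
          (∏ i, x i ^ E j i) = t * (∏ i, x i ^ E2 j i) := by
        intro j hj
        have h2 : (∏ i, x i ^ E2 j i)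
            = (∏ i : Fin e', y i ^ E j (Fin.castSucc i)) * t ^ (E j (Fin.last e') - 1) := by
          rw [Fin.prod_univ_castSucc (f := fun i => x i ^ E2 j i)]
          congr 1
          · refine Finset.prod_congr rfl fun i _ => ?_
            rw [hE2]
            simp [(Fin.castSucc_lt_last i).ne]; rfl
          · rw [hE2]; simp; rfl
        have hpow : t ^ (E j (Fin.last e')) = t * t ^ (E j (Fin.last e') - 1) := by
          conv_lhs => rw [show E j (Fin.last e') = (E j (Fin.last e') - 1) + 1 by omega]
          rw [pow_succ]; ring
        rw [hm j, h2, hpow]; ring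
      set γ : R := z * β1 - ∑ j ∈ Tp, dd j * (∏ i, x i ^ E2 j i) with hγdef
      have htγ : t * γ = ∑ j ∈ T0, dd j * (∏ i, x i ^ E j i) := by
        have hdsplit : z * (t * β1) = (∑ j ∈ T0, dd j * (∏ i, x i ^ E j i))
            + ∑ j ∈ Tp, dd j * (∏ i, x i ^ E j i) := by
          rw [← hd, ← Finset.sum_filter_add_sum_filter_not Finset.univ
            (fun j => E j (Fin.last e') = 0) (fun j => dd j • ∏ i, x i ^ E j i)]
          rw [← hT0, ← hTp]
          simp [smul_eq_mul]
        have h2 : ∑ j ∈ Tp, dd j * (∏ i, x i ^ E j i)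
            = t * ∑ j ∈ Tp, dd j * (∏ i, x i ^ E2 j i) := by
          rw [Finset.mul_sum]
          refine Finset.sum_congr rfl fun j hj => ?_
          have hj0' : ¬ E j (Fin.last e') = 0 := by
            rw [hTp] at hj; exact (Finset.mem_filter.mp hj).2
          rw [hm2 j hj0']; ring
        rw [hγdef]
        rw [h2] at hdsplit
        rw [mul_sub]
        have : t * (z * β1) = z * (t * β1) := by ring
        rw [this, hdsplit]
        ring
      have hregyt : IsWeaklyRegular R (List.ofFn y ++ [t]) := by
        rw [← hxsplit]; exact wr_prefix (L' := [z]) hreg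
      have hjacyt : ∀ r ∈ List.ofFn y ++ [t], r ∈ Ideal.jacobson (⊥ : Ideal R) := by
        intro r hr
        rw [← hxsplit] at hr
        obtain ⟨i, rfl⟩ := List.mem_ofFn.mp hr
        exact hjacx _
      have hγ0 : t * γ ∈ Ideal.span (Set.range
          fun j : {j : ι // E j (Fin.last e') = 0} =>
            ∏ i : Fin e', y i ^ E j.1 (Fin.castSucc i)) := by
        rw [htγ]
        refine Ideal.sum_mem _ fun j hj => ?_
        have hj0' : E j (Fin.last e') = 0 := by
          rw [hT0] at hj; exact (Finset.mem_filter.mp hj).2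
        refine Ideal.mul_mem_left _ _ (Ideal.subset_span ⟨⟨j, hj0'⟩, ?_⟩)
        show (∏ i : Fin e', y i ^ E j (Fin.castSucc i)) = _
        rw [hm j, hj0', pow_zero, mul_one]
      have hγM0 := keyP e' _ R y t hregyt hjacyt {j : ι // E j (Fin.last e') = 0}
        (fun j i => E j.1 (Fin.castSucc i)) le_rfl γ hγ0
      have hzβ1 : z * β1 ∈ Ideal.span (Set.range fun j => ∏ i, x i ^ E2 j i) := by
        have h1 : γ ∈ Ideal.span (Set.range fun j => ∏ i, x i ^ E2 j i) := by
          refine Ideal.span_le.mpr ?_ hγM0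
          rintro _ ⟨j, rfl⟩
          refine Ideal.subset_span ⟨j.1, ?_⟩
          show (∏ i, x i ^ E2 j.1 i) = _
          rw [hE2eq j.1 j.2, hm j.1, j.2, pow_zero, mul_one]
        have heq : z * β1 = γ + ∑ j ∈ Tp, dd j * (∏ i, x i ^ E2 j i) := by
          rw [hγdef]; ring
        rw [heq]
        exact add_mem h1 (Ideal.sum_mem _ fun j _ =>
          Ideal.mul_mem_left _ _ (Ideal.subset_span ⟨j, rfl⟩))
      have hμ2 : ∑ j, ∑ i, E2 j i < μ := by
        have hlt : ∑ j, ∑ i, E2 j i < ∑ j, ∑ i, E j i := by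
          apply Finset.sum_lt_sum
          · intro j _
            refine Finset.sum_le_sum fun i _ => ?_
            rw [hE2]
            dsimp only
            split <;> omega
          · refine ⟨j1, Finset.mem_univ _, ?_⟩
            apply Finset.sum_lt_sum
            · intro i _
              rw [hE2]
              dsimp only
              split <;> omega
            · refine ⟨Fin.last e', Finset.mem_univ _, ?_⟩
              have hE2l : E2 j1 (Fin.last e') = E j1 (Fin.last e') - 1 := by
                rw [hE2]; simp
              rw [hE2l]
              omega
        omega
      have hβ1m2 := keyP (e' + 1) (μ - 1) R x z hreg hjac ι E2 (by omega) β1 hzβ1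
      rw [hβsplit]
      refine add_mem hτM ?_
      obtain ⟨cc, hcc⟩ := (Submodule.mem_span_range_iff_exists_fun R).mp hβ1m2
      rw [← hcc, Finset.mul_sum]
      refine Ideal.sum_mem _ fun j _ => ?_
      have heq2 : t * (cc j • (∏ i, x i ^ E2 j i)) = cc j * (t * ∏ i, x i ^ E2 j i) := by
        rw [smul_eq_mul]; ring
      rw [heq2]
      apply Ideal.mul_mem_left
      by_cases hj : E j (Fin.last e') = 0
      · rw [hE2eq j hj]
        exact Ideal.mul_mem_left _ _ (Ideal.subset_span ⟨j, rfl⟩)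
      · rw [← hm2 j hj]
        exact Ideal.subset_span ⟨j, rfl⟩
termination_by (e, μ)
decreasing_by all_goals simp_wf <;> omega









lemma colon_var (d' : ℕ) (R : Type u) [CommRing R] [IsNoetherianRing R]
    (x : Fin (d' + 1) → R)
    (hreg : RingTheory.Sequence.IsWeaklyRegular R (List.ofFn x))
    (hjac : ∀ i, x i ∈ Ideal.jacobson (⊥ : Ideal R))
    (ι : Type) [Fintype ι] (E : ι → Fin (d' + 1) → ℕ) (i0 : Fin (d' + 1))
    (α : R) (hα : α * x i0 ∈ Ideal.span (Set.range fun j => ∏ i, x i ^ E j i)) :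
    α ∈ Ideal.span (Set.range fun j => ∏ l, x l ^ (E j l - if l = i0 then 1 else 0)) := by
  classical
  set y : Fin d' → R := x ∘ i0.succAbove with hy
  have hperm2 : (List.ofFn x).Perm (List.ofFn y ++ [x i0]) :=
    (perm_ofFn_succAbove x i0).trans (List.perm_append_singleton _ _).symm
  have hjacL : ∀ r ∈ List.ofFn x, r ∈ Ideal.jacobson (⊥ : Ideal R) := by
    intro r hr; obtain ⟨i, rfl⟩ := List.mem_ofFn.mp hr; exact hjac i
  have hregy : RingTheory.Sequence.IsWeaklyRegular R (List.ofFn y ++ [x i0]) :=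
    wr_perm hreg hperm2 hjacL
  have hjacy : ∀ r ∈ List.ofFn y ++ [x i0], r ∈ Ideal.jacobson (⊥ : Ideal R) := by
    intro r hr
    rcases List.mem_append.mp hr with hr | hr
    · obtain ⟨i, rfl⟩ := List.mem_ofFn.mp hr; exact hjac _
    · simp at hr; subst hr; exact hjac _
  obtain ⟨c, hc⟩ := (Submodule.mem_span_range_iff_exists_fun R).mp hα
  set m' : ι → R := fun j => ∏ l, x l ^ (E j l - if l = i0 then 1 else 0) with hm'
  have hsplit : ∀ j, E j i0 ≠ 0 → (∏ l, x l ^ E j l) = m' j * x i0 :=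
    fun j hj => mon_decomp x (E j) i0 hj
  have hm'eq : ∀ j, E j i0 = 0 → m' j = (∏ l, x l ^ E j l) := by
    intro j hj
    rw [hm']
    refine Finset.prod_congr rfl fun l _ => ?_
    by_cases hl : l = i0
    · subst hl; simp [hj]
    · simp [hl]
  have hymon : ∀ j, E j i0 = 0 →
      (∏ l, x l ^ E j l) = ∏ l : Fin d', y l ^ E j (i0.succAbove l) := by
    intro j hj
    rw [Fin.prod_univ_succAbove (fun l => x l ^ E j l) i0, hj, pow_zero, one_mul]
    rfl
  set γ : R := α - ∑ j ∈ Finset.univ.filter (fun j => ¬ E j i0 = 0), c j * m' j with hγ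
  have hγx : x i0 * γ = ∑ j ∈ Finset.univ.filter (fun j => E j i0 = 0),
      c j * (∏ l, x l ^ E j l) := by
    have h1 : α * x i0 = (∑ j ∈ Finset.univ.filter (fun j => E j i0 = 0),
        c j * (∏ l, x l ^ E j l))
        + ∑ j ∈ Finset.univ.filter (fun j => ¬ E j i0 = 0), c j * (∏ l, x l ^ E j l) := by
      rw [← hc, ← Finset.sum_filter_add_sum_filter_not Finset.univ (fun j => E j i0 = 0)
        (fun j => c j • ∏ l, x l ^ E j l)]
      simp [smul_eq_mul]
    have h2 : ∑ j ∈ Finset.univ.filter (fun j => ¬ E j i0 = 0), c j * (∏ l, x l ^ E j l)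
        = (∑ j ∈ Finset.univ.filter (fun j => ¬ E j i0 = 0), c j * m' j) * x i0 := by
      rw [Finset.sum_mul]
      refine Finset.sum_congr rfl fun j hj => ?_
      rw [hsplit j (Finset.mem_filter.mp hj).2]; ring
    rw [hγ, mul_sub]
    rw [h2] at h1
    have : x i0 * α = α * x i0 := mul_comm _ _
    rw [this, h1]
    ring
  have hγmem : x i0 * γ ∈ Ideal.span (Set.range
      fun j : {j : ι // E j i0 = 0} => ∏ l : Fin d', y l ^ E j.1 (i0.succAbove l)) := by
    rw [hγx]
    refine Ideal.sum_mem _ fun j hj => ?_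
    have hj0 : E j i0 = 0 := (Finset.mem_filter.mp hj).2
    refine Ideal.mul_mem_left _ _ (Ideal.subset_span ⟨⟨j, hj0⟩, ?_⟩)
    show (∏ l : Fin d', y l ^ E j (i0.succAbove l)) = _
    rw [hymon j hj0]
  have hkey := keyP d' _ R y (x i0) hregy hjacy {j : ι // E j i0 = 0}
    (fun j l => E j.1 (i0.succAbove l)) le_rfl γ hγmem
  have hγtarget : γ ∈ Ideal.span (Set.range m') := by
    refine Ideal.span_le.mpr ?_ hkey
    rintro _ ⟨j, rfl⟩
    refine Ideal.subset_span ⟨j.1, ?_⟩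
    show m' j.1 = _
    rw [hm'eq j.1 j.2, hymon j.1 j.2]
  have : α = γ + ∑ j ∈ Finset.univ.filter (fun j => ¬ E j i0 = 0), c j * m' j := by
    rw [hγ]; ring
  rw [this]
  exact add_mem hγtarget (Ideal.sum_mem _ fun j _ =>
    Ideal.mul_mem_left _ _ (Ideal.subset_span ⟨j, rfl⟩))





lemma colon_mon (n : ℕ) (d : ℕ) (R : Type u) [CommRing R] [IsNoetherianRing R]
    (x : Fin d → R)
    (hreg : RingTheory.Sequence.IsWeaklyRegular R (List.ofFn x))
    (hjac : ∀ i, x i ∈ Ideal.jacobson (⊥ : Ideal R))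
    (ι : Type) [Fintype ι] (E : ι → Fin d → ℕ) (a : Fin d → ℕ) (hn : (∑ i, a i) ≤ n)
    (α : R) (hα : α * (∏ i, x i ^ a i) ∈ Ideal.span (Set.range fun j => ∏ i, x i ^ E j i)) :
    α ∈ Ideal.span (Set.range fun j => ∏ l, x l ^ (E j l - a l)) := by
  classical
  induction n generalizing E a α with
  | zero =>
    have ha : ∀ i, a i = 0 := by
      intro i
      have := Finset.single_le_sum (f := a) (fun _ _ => Nat.zero_le _) (Finset.mem_univ i)
      omega
    have h1 : (∏ i, x i ^ a i) = 1 := Finset.prod_eq_one fun i _ => by rw [ha i, pow_zero]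
    rw [h1, mul_one] at hα
    have h2 : (fun j => ∏ l, x l ^ (E j l - a l)) = fun j => ∏ l, x l ^ E j l := by
      funext j
      exact Finset.prod_congr rfl fun l _ => by rw [ha l, Nat.sub_zero]
    rw [h2]
    exact hα
  | succ n IH =>
    by_cases hz : ∀ i, a i = 0
    · have h1 : (∏ i, x i ^ a i) = 1 := Finset.prod_eq_one fun i _ => by rw [hz i, pow_zero]
      rw [h1, mul_one] at hα
      have h2 : (fun j => ∏ l, x l ^ (E j l - a l)) = fun j => ∏ l, x l ^ E j l := by
        funext j
        exact Finset.prod_congr rfl fun l _ => by rw [hz l, Nat.sub_zero]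
      rw [h2]
      exact hα
    · push_neg at hz
      obtain ⟨i0, hi0⟩ := hz
      cases d with
      | zero => exact absurd i0.2 (by omega)
      | succ d' =>
        set a' : Fin (d' + 1) → ℕ := fun l => a l - if l = i0 then 1 else 0 with ha'
        have hdec : (∏ i, x i ^ a i) = (∏ i, x i ^ a' i) * x i0 := mon_decomp x a i0 hi0
        have hα2 : (α * ∏ i, x i ^ a' i) * x i0 ∈
            Ideal.span (Set.range fun j => ∏ i, x i ^ E j i) := by
          rw [mul_assoc, ← hdec]
          exact hα
        have hcv := colon_var d' R x hreg hjac ι E i0 _ hα2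
        have hsum : (∑ i, a' i) ≤ n := by
          have h1 : ∀ l, a l = a' l + (if l = i0 then 1 else 0) := by
            intro l
            by_cases hl : l = i0
            · subst hl; simp [ha']; omega
            · simp [ha', hl]
          have h2 : (∑ i, a i) = (∑ i, a' i) + ∑ i, (if i = i0 then 1 else 0) := by
            rw [← Finset.sum_add_distrib]
            exact Finset.sum_congr rfl fun l _ => h1 l
          have h3 : (∑ i : Fin (d' + 1), (if i = i0 then 1 else 0)) = 1 := by
            rw [Finset.sum_ite_eq' Finset.univ i0 (fun _ => 1)]; simp
          omega
        have hIH := IH (fun j l => E j l - if l = i0 then 1 else 0) a' hsum _ hcv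
        have hfin : (fun j => ∏ l, x l ^ ((E j l - if l = i0 then 1 else 0) - a' l))
            = fun j => ∏ l, x l ^ (E j l - a l) := by
          funext j
          refine Finset.prod_congr rfl fun l _ => ?_
          congr 1
          by_cases hl : l = i0
          · subst hl; simp [ha']; omega
          · simp [ha', hl]
        rw [hfin] at hIH
        exact hIH





theorem stmt_2 {R : Type*} [CommRing R] [IsNoetherianRing R] {d : ℕ} (x : Fin d → R)
    (hreg : RingTheory.Sequence.IsRegular R (List.ofFn x))
    (hjac : ∀ i, x i ∈ Ideal.jacobson (⊥ : Ideal R))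
    {r : ℕ} (E : Fin (r + 1) → Fin d → ℕ) (u : Fin (r + 1) → R)
    (hu : ∀ j, u j = ∏ i, x i ^ E j i)
    (I : Ideal R) (hI : I = Ideal.span (Set.range u)) (hIproper : I ≠ ⊤) (hI0 : I ≠ ⊥)
    (a b : Fin d → ℕ) (v w : R) (hv : v = ∏ i, x i ^ a i) (hw : w = ∏ i, x i ^ b i)
    (hvw : u 0 = v * w) (hcop : ∀ i, min (a i) (b i) = 0) (hv1 : v ≠ 1) (hw1 : w ≠ 1) :
    I = (Ideal.span ({v} ∪ u '' {j | j ≠ 0})) ⊓ (Ideal.span ({w} ∪ u '' {j | j ≠ 0})) := by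
  classical
  set S : Set R := u '' {j | j ≠ 0} with hS
  apply le_antisymm
  · rw [hI]
    refine Ideal.span_le.mpr ?_
    rintro g ⟨j, rfl⟩
    by_cases hj : j = 0
    · subst hj
      rw [hvw]
      refine Submodule.mem_inf.mpr ⟨?_, ?_⟩
      · exact Ideal.mul_mem_right w _ (Ideal.subset_span (Set.mem_union_left _ rfl))
      · rw [mul_comm]
        exact Ideal.mul_mem_right v _ (Ideal.subset_span (Set.mem_union_left _ rfl))
    · have hmem : u j ∈ S := ⟨j, hj, rfl⟩
      exact Submodule.mem_inf.mpr
        ⟨Ideal.subset_span (Set.mem_union_right _ hmem),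
         Ideal.subset_span (Set.mem_union_right _ hmem)⟩
  · intro f hf
    obtain ⟨hfA, hfB⟩ := Submodule.mem_inf.mp hf
    rw [Ideal.span_union] at hfA
    obtain ⟨p, hp, s, hs, rfl⟩ := Submodule.mem_sup.mp hfA
    obtain ⟨α, rfl⟩ := Ideal.mem_span_singleton'.mp hp
    have hsI : Ideal.span S ≤ I := by
      rw [hI]
      exact Ideal.span_mono (by rintro _ ⟨j, hj, rfl⟩; exact ⟨j, rfl⟩)
    have hsB : Ideal.span S ≤ Ideal.span ({w} ∪ S) :=
      Ideal.span_mono Set.subset_union_right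
    have hαv : α * v ∈ Ideal.span ({w} ∪ S) := by
      have : α * v = (α * v + s) - s := by ring
      rw [this]
      exact sub_mem hfB (hsB hs)
    set G : Fin (r + 1) → Fin d → ℕ := fun j => if j = 0 then b else E j with hG
    have hws : ({w} : Set R) ∪ S = Set.range (fun j => ∏ i, x i ^ G j i) := by
      ext g
      constructor
      · rintro (rfl | ⟨j, hj, rfl⟩)
        · refine ⟨0, ?_⟩
          show (∏ i, x i ^ G 0 i) = _
          rw [hw]
          exact Finset.prod_congr rfl fun i _ => by rw [hG]; simp
        · refine ⟨j, ?_⟩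
          show (∏ i, x i ^ G j i) = _
          rw [hu j]
          have hj' : j ≠ 0 := hj
          exact Finset.prod_congr rfl fun i _ => by rw [hG]; simp [hj']
      · rintro ⟨j, rfl⟩
        by_cases hj : j = 0
        · subst hj
          left
          show (∏ i, x i ^ G 0 i) = w
          rw [hw]
          exact Finset.prod_congr rfl fun i _ => by rw [hG]; simp
        · right
          refine ⟨j, hj, ?_⟩
          show u j = (∏ i, x i ^ G j i)
          rw [hu j]
          exact Finset.prod_congr rfl fun i _ => by rw [hG]; simp [hj]
    rw [hws] at hαv
    have hα2 : α * (∏ i, x i ^ a i) ∈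
        Ideal.span (Set.range fun j => ∏ i, x i ^ G j i) := by rw [← hv]; exact hαv
    have hcm := colon_mon (∑ i, a i) d R x hreg.toIsWeaklyRegular hjac (Fin (r + 1)) G a
      le_rfl α hα2
    have hαvI : α * v ∈ I := by
      obtain ⟨c, hc⟩ := (Submodule.mem_span_range_iff_exists_fun R).mp hcm
      rw [← hc, Finset.sum_mul]
      refine Ideal.sum_mem _ fun j _ => ?_
      have heq : (c j • ∏ l, x l ^ (G j l - a l)) * v
          = c j * ((∏ l, x l ^ (G j l - a l)) * v) := by rw [smul_eq_mul]; ring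
      rw [heq]
      apply Ideal.mul_mem_left
      have hmm : (∏ l, x l ^ (G j l - a l)) * v = ∏ l, x l ^ ((G j l - a l) + a l) := by
        rw [mon_add, hv]
      rw [hmm]
      by_cases hj : j = 0
      · subst hj
        have hprod : (∏ l, x l ^ ((G 0 l - a l) + a l)) = ∏ l, x l ^ (a l + b l) := by
          refine Finset.prod_congr rfl fun l _ => ?_
          congr 1
          have := hcop l
          have hG0 : G 0 = b := by rw [hG]; simp
          rw [hG0]
          omega
        rw [hprod, mon_add, ← hv, ← hw, ← hvw, hI]
        exact Ideal.subset_span ⟨0, rfl⟩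
      · have hprod : (∏ l, x l ^ ((G j l - a l) + a l)) = ∏ l, x l ^ (E j l + (a l - E j l)) := by
          refine Finset.prod_congr rfl fun l _ => ?_
          congr 1
          have hGj : G j = E j := by rw [hG]; simp [hj]
          rw [hGj]
          omega
        rw [hprod, mon_add, ← hu j, hI]
        exact Ideal.mul_mem_right _ _ (Ideal.subset_span ⟨j, rfl⟩)
    exact add_mem hαvI (hsI hs)
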